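/- Let F be a field of characteristic 0, n ≥ 1, d ≥ 1. For an element m of the free magma on Fin n of degree d' ≤ d, define ψ(m) := Σ_ε Π_{t=1}^{d'} z_{σ_{m_ε}(t), t, l^{m_ε}_t} ∈ R, the sum over all choices ε of a Boolean for each internal node of m. Then: (i) ψ(m) ≠ 0; (ii) if m ≈ m' then ψ(m) = ψ(m'); and (iii) if m and m' are monomials of degree ≤ d with m ≉ m', then the sets of monomials occurring with nonzero coefficient in ψ(m) and in ψ(m') are disjoint; in particular ψ(m) ≠ ψ(m'). -/

import Mathlib

noncomputable section

open scoped BigOperators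

namespace NAPIT

/-- The list of (leaf label, leaf level) pairs of a nonassociative monomial (element of the
free magma), in left-to-right order, where the root of the monomial is at level `s`. -/
def leafData {n : ℕ} : FreeMagma (Fin n) → ℕ → List (Fin n × ℕ)
  | FreeMagma.of i, s => [(i, s)]
  | FreeMagma.mul x y, s => leafData x (s + 1) ++ leafData y (s + 1)

/-- The degree (number of leaves) of a nonassociative monomial. -/
def degM {n : ℕ} : FreeMagma (Fin n) → ℕ
  | FreeMagma.of _ => 1
  | FreeMagma.mul x y => degM x + degM y

/-- The depth of a nonassociative monomial (root at level 1; the depth is the maximal level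
of a leaf). -/
def depthM {n : ℕ} : FreeMagma (Fin n) → ℕ
  | FreeMagma.of _ => 1
  | FreeMagma.mul x y => max (depthM x) (depthM y) + 1

/-- Evaluation of a nonassociative monomial at `b : Fin n → A`, using `mul` as the product on
`A`; this is the unique magma homomorphism `FreeMagma (Fin n) → (A, mul)` with `x_i ↦ b i`. -/
def evalWith {n : ℕ} {A : Type*} (mul : A → A → A) (b : Fin n → A) : FreeMagma (Fin n) → A
  | FreeMagma.of i => b i
  | FreeMagma.mul x y => mul (evalWith mul b x) (evalWith mul b y)

/-- The multiset of all variants `m_ε` of a monomial `m`, where `ε` ranges over all choices of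
a Boolean for each internal node of `m`, and `m_ε` is obtained from `m` by swapping the two
children at exactly those internal nodes where `ε` is true (counted with multiplicity). -/
def variants {n : ℕ} : FreeMagma (Fin n) → Multiset (FreeMagma (Fin n))
  | FreeMagma.of i => {FreeMagma.of i}
  | FreeMagma.mul x y =>
      (variants x).bind fun x' => (variants y).bind fun y' =>
        {FreeMagma.mul x' y', FreeMagma.mul y' x'}

/-- The underlying module of the algebra `A'_d(R)`: arrays `x[i,j,k]` with
`i, j ∈ Fin (d+1)`, `k ∈ Fin d` (zero-based; the paper's indices are shifted by one). -/
def Arr (d : ℕ) (R : Type*) : Type _ := Fin (d + 1) → Fin (d + 1) → Fin d → R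

namespace Arr

variable {d : ℕ} {R : Type*}

instance instAddCommGroup [AddCommGroup R] : AddCommGroup (Arr d R) :=
  inferInstanceAs (AddCommGroup (Fin (d + 1) → Fin (d + 1) → Fin d → R))

instance instModule {S : Type*} [Semiring S] [AddCommGroup R] [Module S R] :
    Module S (Arr d R) :=
  inferInstanceAs (Module S (Fin (d + 1) → Fin (d + 1) → Fin d → R))

/-- The bilinear product `∘` of `A'_d(R)`:
`(x ∘ y)[i,j,k] = ∑_{l} x[i,l,k+1] * y[l,j,k+1]` if `k+1` is a legal third index, else `0`. -/
def aprod [CommRing R] (x y : Arr d R) : Arr d R := fun i j k =>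
  if h : (k : ℕ) + 1 < d then
    ∑ l : Fin (d + 1), x i l ⟨(k : ℕ) + 1, h⟩ * y l j ⟨(k : ℕ) + 1, h⟩
  else 0

instance instMul [CommRing R] : Mul (Arr d R) := ⟨aprod⟩

end Arr

/-- The algebra `C'_d(R)`: same underlying module as `A'_d(R)`, with the anticommutator
product `a ⊙ b = a ∘ b + b ∘ a`. -/
def CArr (d : ℕ) (R : Type*) : Type _ := Arr d R

namespace CArr

variable {d : ℕ} {R : Type*}

/-- The identity map `A'_d(R) → C'_d(R)` of underlying modules. -/
def ofArr (x : Arr d R) : CArr d R := x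

/-- The identity map `C'_d(R) → A'_d(R)` of underlying modules. -/
def toArr (x : CArr d R) : Arr d R := x

instance instAddCommGroup [AddCommGroup R] : AddCommGroup (CArr d R) :=
  inferInstanceAs (AddCommGroup (Arr d R))

instance instModule {S : Type*} [Semiring S] [AddCommGroup R] [Module S R] :
    Module S (CArr d R) :=
  inferInstanceAs (Module S (Arr d R))

instance instMul [CommRing R] : Mul (CArr d R) :=
  ⟨fun a b => ofArr (toArr a * toArr b + toArr b * toArr a)⟩

end CArr

/-- The element `Z_i ∈ A'_d(R)`, `R = MvPolynomial (Fin n × Fin d × Fin d) F`, whose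
`(j, j+1, k)` entry is the indeterminate `z_{i,j,k}` and whose other entries vanish. -/
def Z (F : Type*) [CommRing F] (n d : ℕ) (i : Fin n) :
    Arr d (MvPolynomial (Fin n × Fin d × Fin d) F) := fun j j' k =>
  if h : (j : ℕ) < d ∧ (j' : ℕ) = (j : ℕ) + 1 then
    MvPolynomial.X (i, ⟨(j : ℕ), h.1⟩, k)
  else 0

/-- The element `Z_i` regarded as an element of `C'_d(R)`. -/
def ZC (F : Type*) [CommRing F] (n d : ℕ) (i : Fin n) :
    CArr d (MvPolynomial (Fin n × Fin d × Fin d) F) := CArr.ofArr (Z F n d i)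

/-- The monomial `∏_{t=1}^{d'} z_{σ_m(t), (t-1) + k1, (l^m_t - 1) + k2}` associated to a
nonassociative monomial `m` of degree `d'` and offsets `k1, k2` (all indices zero-based; the
paper's 1-based offsets are `k1 + 1`, `k2 + 1`).  Indices which would fall out of range are
discarded (this never happens in the intended range of parameters). -/
def monProd (F : Type*) [CommRing F] {n : ℕ} (d : ℕ) (k1 k2 : ℕ) (m : FreeMagma (Fin n)) :
    MvPolynomial (Fin n × Fin d × Fin d) F :=
  ((((leafData m 1).zipIdx).map Prod.swap).map fun p =>
    if h : p.1 + k1 < d ∧ p.2.2 - 1 + k2 < d then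
      MvPolynomial.X (p.2.1, ⟨p.1 + k1, h.1⟩, ⟨p.2.2 - 1 + k2, h.2⟩)
    else 0).prod

/-- `ψ(m) = ∑_ε ∏_{t=1}^{d'} z_{σ_{m_ε}(t), t, l^{m_ε}_t}` (1-based), the sum running over all
choices `ε` of a Boolean for each internal node of `m`. -/
def psi (F : Type*) [CommRing F] {n : ℕ} (d : ℕ) (m : FreeMagma (Fin n)) :
    MvPolynomial (Fin n × Fin d × Fin d) F :=
  ((variants m).map fun m' => monProd F d 0 0 m').sum

/-- The coefficient function of an element of the free nonunital nonassociative algebra. -/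
def coeffOf {F : Type*} [Semiring F] {n : ℕ}
    (f : FreeNonUnitalNonAssocAlgebra F (Fin n)) : FreeMagma (Fin n) →₀ F := f.coeff

/-- Evaluation of an element of the free nonunital nonassociative algebra on `x_1, …, x_n` at
the tuple `b`, with `mul` as the product of the target: the linear extension of
`m ↦ evalWith mul b m`, i.e. the unique nonunital `F`-algebra homomorphism sending
`x_i ↦ b i` into `(A, mul)`. -/
def evalNAWith {F : Type*} [Semiring F] {n : ℕ} {A : Type*}
    [AddCommMonoid A] [Module F A] (mul : A → A → A) (b : Fin n → A)
    (f : FreeNonUnitalNonAssocAlgebra F (Fin n)) : A :=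
  Finsupp.sum (coeffOf f) fun m c => c • evalWith mul b m

/-- Evaluation of an element of the free nonunital nonassociative algebra at a tuple `b` of
elements of a (not necessarily unital/associative) algebra `A`: the unique nonunital
`F`-algebra homomorphism sending `x_i ↦ b i`. -/
def evalNA {F : Type*} [Semiring F] {n : ℕ} {A : Type*}
    [AddCommMonoid A] [Mul A] [Module F A] (b : Fin n → A)
    (f : FreeNonUnitalNonAssocAlgebra F (Fin n)) : A :=
  evalNAWith (· * ·) b f

/-- Evaluation of an element of the unitization of the free nonunital nonassociative algebra
at a tuple `b` of elements of the unitization of `A`: the unique unital `F`-algebra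
homomorphism sending `x_i ↦ b i` (and the adjoined unit to the unit). -/
def evalUnit {F : Type*} [CommSemiring F] {n : ℕ} {A : Type*}
    [AddCommMonoid A] [Mul A] [Module F A] (b : Fin n → Unitization F A)
    (f : Unitization F (FreeNonUnitalNonAssocAlgebra F (Fin n))) : Unitization F A :=
  Unitization.inl f.fst + evalNA b f.snd

/-- The commutativity congruence on the free magma: the smallest equivalence relation with
`m₁ * m₂ ≈ m₂ * m₁` and compatible with the product. -/
inductive CommEq {n : ℕ} : FreeMagma (Fin n) → FreeMagma (Fin n) → Prop
  | refl (m : FreeMagma (Fin n)) : CommEq m m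
  | symm {a b : FreeMagma (Fin n)} : CommEq a b → CommEq b a
  | trans {a b c : FreeMagma (Fin n)} : CommEq a b → CommEq b c → CommEq a c
  | comm (a b : FreeMagma (Fin n)) : CommEq (a * b) (b * a)
  | mul_congr {a a' b b' : FreeMagma (Fin n)} :
      CommEq a a' → CommEq b b' → CommEq (a * b) (a' * b')

/-- The basis monomial `m` of the free nonunital nonassociative algebra. -/
def single1 (F : Type*) [Semiring F] {n : ℕ} (m : FreeMagma (Fin n)) :
    FreeNonUnitalNonAssocAlgebra F (Fin n) :=
  MonoidAlgebra.ofCoeff (Finsupp.single m 1 : FreeMagma (Fin n) →₀ F)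

/-- `I_comm`: the `F`-linear span of `{m − m' : m ≈ m'}` inside the free nonunital
nonassociative algebra. -/
def Icomm (F : Type*) [Field F] (n : ℕ) :
    Submodule F (FreeNonUnitalNonAssocAlgebra F (Fin n)) :=
  Submodule.span F
    {x | ∃ m m' : FreeMagma (Fin n), CommEq m m' ∧ x = single1 F m - single1 F m'}

section Aux
variable {n d : ℕ}

lemma one_le_degM (m : FreeMagma (Fin n)) : 1 ≤ degM m := by
  induction m with
  | ih1 i => simp [degM]
  | ih2 x y ihx ihy => simp only [degM]; omega

lemma depthM_le_degM (m : FreeMagma (Fin n)) : depthM m ≤ degM m := by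
  induction m with
  | ih1 i => simp [depthM, degM]
  | ih2 x y ihx ihy =>
    have := one_le_degM x; have := one_le_degM y
    simp only [depthM, degM]; omega

lemma leafData_length (m : FreeMagma (Fin n)) (s : ℕ) :
    (leafData m s).length = degM m := by
  induction m generalizing s with
  | ih1 i => simp [leafData, degM]
  | ih2 x y ihx ihy => simp [leafData, degM, ihx, ihy]

lemma leafData_level (m : FreeMagma (Fin n)) (s : ℕ) :
    ∀ p ∈ leafData m s, s + 1 ≤ p.2 + 1 ∧ p.2 + 1 ≤ s + depthM m := by
  induction m generalizing s with
  | ih1 i => intro p hp; simp [leafData] at hp; subst hp; simp [depthM]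
  | ih2 x y ihx ihy =>
    intro p hp
    simp only [leafData, List.mem_append] at hp
    rcases hp with hp | hp
    · have := ihx (s+1) p hp; simp only [depthM]; omega
    · have := ihy (s+1) p hp; simp only [depthM]; omega

/-- The weight of a leaf-data list. -/
def wt {n : ℕ} (l : List (Fin n × ℕ)) : ℚ := (l.map fun p => (2:ℚ)^(-(p.2:ℤ))).sum

lemma wt_leafData (m : FreeMagma (Fin n)) (s : ℕ) :
    wt (leafData m s) = (2:ℚ)^(-(s:ℤ)) := by
  induction m generalizing s with
  | ih1 i => simp [wt, leafData]
  | ih2 x y ihx ihy =>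
    simp only [wt, leafData, List.map_append, List.sum_append]
    rw [show ((leafData x (s+1)).map fun p => (2:ℚ)^(-(p.2:ℤ))).sum = wt (leafData x (s+1)) from rfl,
       show ((leafData y (s+1)).map fun p => (2:ℚ)^(-(p.2:ℤ))).sum = wt (leafData y (s+1)) from rfl,
       ihx, ihy]
    push_cast
    rw [show (-(↑s + 1) : ℤ) = -(s:ℤ) + (-1) from by ring, zpow_add₀ (by norm_num : (2:ℚ) ≠ 0)]
    ring

lemma sum_take_lt {L : List ℚ} (h : ∀ q ∈ L, 0 < q) {a b : ℕ} (hab : a < b)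
    (hb : b ≤ L.length) : (L.take a).sum < (L.take b).sum := by
  induction L generalizing a b with
  | nil => simp at hb; omega
  | cons q L ih =>
    have hq : 0 < q := h q (by simp)
    match a, b with
    | 0, b + 1 =>
      simp only [List.take_zero, List.sum_nil, List.take_succ_cons, List.sum_cons]
      have : 0 ≤ (L.take b).sum :=
        List.sum_nonneg fun x hx => le_of_lt (h x (List.mem_cons_of_mem _ (List.mem_of_mem_take hx)))
      linarith
    | a + 1, b + 1 =>
      simp only [List.take_succ_cons, List.sum_cons]
      have := ih (fun x hx => h x (List.mem_cons_of_mem _ hx)) (by omega : a < b)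
        (by simpa using hb)
      linarith

lemma leafData_inj (m₁ : FreeMagma (Fin n)) : ∀ (m₂ : FreeMagma (Fin n)) (s : ℕ),
    leafData m₁ s = leafData m₂ s → m₁ = m₂ := by
  induction m₁ with
  | ih1 i =>
    intro m₂ s hEq
    cases m₂ with
    | of j =>
      have : i = j := by simpa [leafData] using hEq
      rw [this]
    | mul x y =>
      exfalso
      have hlen := congrArg List.length hEq
      rw [leafData_length, leafData_length] at hlen
      have := one_le_degM x; have := one_le_degM y
      simp only [degM] at hlen; omega
  | ih2 x y ihx ihy =>
    intro m₂ s hEq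
    cases m₂ with
    | of j =>
      exfalso
      have hlen := congrArg List.length hEq
      rw [leafData_length, leafData_length] at hlen
      have := one_le_degM x; have := one_le_degM y
      simp only [degM] at hlen; omega
    | mul x' y' =>
      have hEq' : leafData x (s+1) ++ leafData y (s+1)
          = leafData x' (s+1) ++ leafData y' (s+1) := hEq
      have hlenE := congrArg List.length hEq'
      simp only [List.length_append] at hlenE
      have hlen : (leafData x (s+1)).length = (leafData x' (s+1)).length := by
        by_contra hne
        have hpos : ∀ q ∈ (leafData x (s+1) ++ leafData y (s+1)).map
            fun p => (2:ℚ)^(-(p.2:ℤ)), 0 < q := by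
          intro q hq
          simp only [List.mem_map] at hq
          obtain ⟨p, _, rfl⟩ := hq
          positivity
        have htake1 : leafData x (s+1)
            = (leafData x (s+1) ++ leafData y (s+1)).take (leafData x (s+1)).length := by
          simp
        have htake2 : leafData x' (s+1)
            = (leafData x (s+1) ++ leafData y (s+1)).take (leafData x' (s+1)).length := by
          rw [hEq']; simp
        have hw : wt ((leafData x (s+1) ++ leafData y (s+1)).take (leafData x (s+1)).length)
            = wt ((leafData x (s+1) ++ leafData y (s+1)).take (leafData x' (s+1)).length) := by
          rw [← htake1, ← htake2, wt_leafData, wt_leafData]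
        have hwt : ∀ k, wt ((leafData x (s+1) ++ leafData y (s+1)).take k)
            = (((leafData x (s+1) ++ leafData y (s+1)).map
                fun p => (2:ℚ)^(-(p.2:ℤ))).take k).sum := by
          intro k; simp [wt, List.map_take]
        rw [hwt, hwt] at hw
        have hb1 : (leafData x (s+1)).length
            ≤ ((leafData x (s+1) ++ leafData y (s+1)).map fun p => (2:ℚ)^(-(p.2:ℤ))).length := by
          simp
        have hb2 : (leafData x' (s+1)).length
            ≤ ((leafData x (s+1) ++ leafData y (s+1)).map fun p => (2:ℚ)^(-(p.2:ℤ))).length := by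
          simp only [List.length_map, List.length_append]; omega
        rcases lt_or_gt_of_ne hne with hlt | hlt
        · exact absurd hw (ne_of_lt (sum_take_lt hpos hlt hb2))
        · exact absurd hw.symm (ne_of_lt (sum_take_lt hpos hlt hb1))
      obtain ⟨h1, h2⟩ := List.append_inj hEq' hlen
      rw [ihx x' (s+1) h1, ihy y' (s+1) h2]; rfl

end Aux

section Aux2
variable {n d : ℕ}

/-- The exponent vector of the monomial `monProd F d 0 0 m`. -/
def Efun {n : ℕ} (d : ℕ) (m : FreeMagma (Fin n)) : (Fin n × Fin d × Fin d) →₀ ℕ :=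
  ((((leafData m 1).zipIdx).map Prod.swap).map fun p =>
    if h : p.1 < d ∧ p.2.2 - 1 < d then
      Finsupp.single (p.2.1, ⟨p.1, h.1⟩, ⟨p.2.2 - 1, h.2⟩) 1
    else 0).sum

lemma enum_leafData_bounds (m : FreeMagma (Fin n)) (hm : degM m ≤ d) :
    ∀ p ∈ ((leafData m 1).zipIdx).map Prod.swap, p.1 < d ∧ p.2.2 - 1 < d ∧ 1 ≤ p.2.2 := by
  rintro ⟨t0, q0⟩ hp
  obtain ⟨⟨q, t⟩, hmem, heq⟩ := List.mem_map.mp hp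
  rw [Prod.swap_prod_mk, Prod.mk.injEq] at heq
  obtain ⟨rfl, rfl⟩ := heq
  obtain ⟨ht, hqe⟩ := List.mem_zipIdx' hmem
  have hq : q ∈ leafData m 1 := hqe ▸ List.getElem_mem _
  rw [leafData_length] at ht
  have hl := leafData_level m 1 q hq
  have hdep := depthM_le_degM m
  dsimp only
  refine ⟨by omega, by omega, by omega⟩

lemma prod_aux {F : Type*} [CommRing F] (l : List (ℕ × (Fin n × ℕ)))
    (h : ∀ p ∈ l, p.1 < d ∧ p.2.2 - 1 < d) :
    (l.map fun p =>
      if hh : p.1 + 0 < d ∧ p.2.2 - 1 + 0 < d then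
        (MvPolynomial.X (p.2.1, ⟨p.1 + 0, hh.1⟩, ⟨p.2.2 - 1 + 0, hh.2⟩)
          : MvPolynomial (Fin n × Fin d × Fin d) F)
      else 0).prod
    = MvPolynomial.monomial ((l.map fun p =>
        if hh : p.1 < d ∧ p.2.2 - 1 < d then
          Finsupp.single (p.2.1, ⟨p.1, hh.1⟩, ⟨p.2.2 - 1, hh.2⟩) 1 else 0).sum) 1 := by
  simp only [Nat.add_zero]
  induction l with
  | nil => simp [MvPolynomial.monomial_zero']
  | cons p l ih =>
    obtain ⟨h1, h2⟩ := h p (List.mem_cons_self)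
    rw [List.map_cons, List.prod_cons, List.map_cons, List.sum_cons,
        dif_pos ⟨h1, h2⟩, dif_pos ⟨h1, h2⟩,
        ih (fun q hq => h q (List.mem_cons_of_mem p hq))]
    rw [show (MvPolynomial.X (p.2.1, (⟨p.1, h1⟩ : Fin d), (⟨p.2.2 - 1, h2⟩ : Fin d))
        : MvPolynomial (Fin n × Fin d × Fin d) F)
      = MvPolynomial.monomial (Finsupp.single (p.2.1, ⟨p.1, h1⟩, ⟨p.2.2 - 1, h2⟩) 1) 1 from rfl,
      MvPolynomial.monomial_mul, one_mul]

lemma monProd_eq_monomial {F : Type*} [CommRing F] (m : FreeMagma (Fin n)) (hm : degM m ≤ d) :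
    monProd F d 0 0 m = MvPolynomial.monomial (Efun d m) 1 := by
  rw [monProd, Efun, prod_aux _ (fun p hp => ⟨(enum_leafData_bounds m hm p hp).1,
    (enum_leafData_bounds m hm p hp).2.1⟩)]

lemma sum_single_apply (l : List (ℕ × (Fin n × ℕ)))
    (h : ∀ p ∈ l, p.1 < d ∧ p.2.2 - 1 < d ∧ 1 ≤ p.2.2) (x : Fin n × Fin d × Fin d) :
    ((l.map fun p =>
        if hh : p.1 < d ∧ p.2.2 - 1 < d then
          Finsupp.single (p.2.1, ⟨p.1, hh.1⟩, ⟨p.2.2 - 1, hh.2⟩) (1:ℕ) else 0).sum) x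
    = l.countP fun p => decide (p.1 = (x.2.1 : ℕ) ∧ p.2 = (x.1, (x.2.2 : ℕ) + 1)) := by
  induction l with
  | nil => simp
  | cons p l ih =>
    obtain ⟨h1, h2, h3⟩ := h p (List.mem_cons_self)
    rw [List.map_cons, List.sum_cons, List.countP_cons, Finsupp.add_apply,
        ih (fun q hq => h q (List.mem_cons_of_mem p hq)), dif_pos ⟨h1, h2⟩,
        Finsupp.single_apply]
    have hiff : ((p.2.1, (⟨p.1, h1⟩ : Fin d), (⟨p.2.2 - 1, h2⟩ : Fin d)) = x)
        ↔ (p.1 = (x.2.1 : ℕ) ∧ p.2 = (x.1, (x.2.2 : ℕ) + 1)) := by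
      obtain ⟨x1, x2, x3⟩ := x
      obtain ⟨pt, pi, pl⟩ := p
      simp only [Prod.mk.injEq, Fin.ext_iff] at *
      constructor
      · rintro ⟨a, b, c⟩; exact ⟨b, a, by omega⟩
      · rintro ⟨a, b, c⟩; exact ⟨b, a, by omega⟩
    by_cases hc : p.1 = (x.2.1 : ℕ) ∧ p.2 = (x.1, (x.2.2 : ℕ) + 1)
    · rw [if_pos (hiff.mpr hc), if_pos (by simpa using hc)]; omega
    · rw [if_neg (fun hh => hc (hiff.mp hh)), if_neg (by simpa using hc)]; omega

lemma countP_enumFrom (x : Fin n × Fin d × Fin d) (L : List (Fin n × ℕ)) (k : ℕ) :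
    ((L.zipIdx k).map Prod.swap).countP (fun p => decide (p.1 = (x.2.1 : ℕ) ∧ p.2 = (x.1, (x.2.2 : ℕ) + 1)))
    = if (k ≤ (x.2.1 : ℕ) ∧ L[(x.2.1 : ℕ) - k]? = some (x.1, (x.2.2 : ℕ) + 1)) then 1 else 0 := by
  induction L generalizing k with
  | nil => simp
  | cons a L ih =>
    rw [List.zipIdx_cons, List.map_cons, Prod.swap_prod_mk, List.countP_cons, ih (k+1)]
    simp only [decide_eq_true_eq]
    by_cases hk1 : k = (x.2.1 : ℕ)
    · have hnot : ¬ ((k + 1 ≤ (x.2.1 : ℕ))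
          ∧ L[(x.2.1 : ℕ) - (k+1)]? = some (x.1, (x.2.2 : ℕ) + 1)) :=
        fun hh => absurd hh.1 (by omega)
      rw [if_neg hnot, zero_add]
      subst hk1
      by_cases ha : a = (x.1, (x.2.2 : ℕ) + 1) <;> simp [ha, Nat.sub_self]
    · have hhead : ¬ ((k, a).1 = (x.2.1 : ℕ) ∧ (k, a).2 = (x.1, (x.2.2 : ℕ) + 1)) :=
        fun hh => hk1 hh.1
      rw [if_neg hhead, add_zero]
      by_cases hk2 : k ≤ (x.2.1 : ℕ)
      · have h2 : (x.2.1 : ℕ) - k = ((x.2.1 : ℕ) - (k + 1)) + 1 := by omega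
        rw [h2, List.getElem?_cons_succ,
          if_congr (and_congr_left' (by omega : k + 1 ≤ (x.2.1 : ℕ) ↔ k ≤ (x.2.1 : ℕ)))
            rfl rfl]
      · have hA : ¬ ((k + 1 ≤ (x.2.1 : ℕ))
            ∧ L[(x.2.1 : ℕ) - (k+1)]? = some (x.1, (x.2.2 : ℕ) + 1)) :=
          fun hh => absurd hh.1 (by omega)
        have hB : ¬ ((k ≤ (x.2.1 : ℕ))
            ∧ (a :: L)[(x.2.1 : ℕ) - k]? = some (x.1, (x.2.2 : ℕ) + 1)) :=
          fun hh => hk2 hh.1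
        rw [if_neg hA, if_neg hB]

lemma Efun_apply (m : FreeMagma (Fin n)) (hm : degM m ≤ d) (x : Fin n × Fin d × Fin d) :
    Efun d m x
    = if (leafData m 1)[(x.2.1 : ℕ)]? = some (x.1, (x.2.2 : ℕ) + 1) then 1 else 0 := by
  rw [Efun, sum_single_apply _ (enum_leafData_bounds m hm) x,
      countP_enumFrom]
  simp

lemma Efun_inj (m₁ m₂ : FreeMagma (Fin n)) (h₁ : degM m₁ ≤ d) (h₂ : degM m₂ ≤ d)
    (he : Efun d m₁ = Efun d m₂) : m₁ = m₂ := by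
  have key : ∀ x : Fin n × Fin d × Fin d,
      (leafData m₁ 1)[(x.2.1 : ℕ)]? = some (x.1, (x.2.2 : ℕ) + 1)
      ↔ (leafData m₂ 1)[(x.2.1 : ℕ)]? = some (x.1, (x.2.2 : ℕ) + 1) := by
    intro x
    have hx := DFunLike.congr_fun he x
    rw [Efun_apply m₁ h₁ x, Efun_apply m₂ h₂ x] at hx
    constructor <;> intro hh
    · by_contra hc
      rw [if_pos hh, if_neg hc] at hx
      exact one_ne_zero hx
    · by_contra hc
      rw [if_neg hc, if_pos hh] at hx
      exact zero_ne_one hx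
  apply leafData_inj m₁ m₂ 1
  apply List.ext_getElem?
  intro t
  have hlen₁ : (leafData m₁ 1).length = degM m₁ := leafData_length m₁ 1
  have hlen₂ : (leafData m₂ 1).length = degM m₂ := leafData_length m₂ 1
  rcases hL1 : (leafData m₁ 1)[t]? with _ | q
  · rcases hL2 : (leafData m₂ 1)[t]? with _ | q
    · rfl
    · exfalso
      have hq := List.mem_of_getElem? hL2
      have hlev := leafData_level m₂ 1 q hq
      have ht : t < (leafData m₂ 1).length := by
        by_contra hh
        rw [List.getElem?_eq_none (by omega)] at hL2
        cases hL2
      have hdep := depthM_le_degM m₂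
      have htd : t < d := by omega
      have hqd : q.2 - 1 < d := by omega
      have := (key (q.1, ⟨t, htd⟩, ⟨q.2 - 1, hqd⟩)).mpr
        (by simpa [show q.2 - 1 + 1 = q.2 by omega] using hL2)
      simp only at this
      rw [hL1] at this
      cases this
  · have hq := List.mem_of_getElem? hL1
    have hlev := leafData_level m₁ 1 q hq
    have ht : t < (leafData m₁ 1).length := by
      by_contra hh
      rw [List.getElem?_eq_none (by omega)] at hL1
      cases hL1
    have hdep := depthM_le_degM m₁
    have htd : t < d := by omega
    have hqd : q.2 - 1 < d := by omega
    have := (key (q.1, ⟨t, htd⟩, ⟨q.2 - 1, hqd⟩)).mp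
      (by simpa [show q.2 - 1 + 1 = q.2 by omega] using hL1)
    simp only at this
    rw [this]
    congr 1
    rw [show q.2 - 1 + 1 = q.2 by omega]

end Aux2

section Aux3
variable {n d : ℕ}

lemma self_mem_variants (m : FreeMagma (Fin n)) : m ∈ variants m := by
  induction m with
  | ih1 i => simp [variants]
  | ih2 x y ihx ihy =>
    show x * y ∈ variants (FreeMagma.mul x y)
    rw [variants, Multiset.mem_bind]
    exact ⟨x, ihx, by rw [Multiset.mem_bind]; exact ⟨y, ihy, by simp⟩⟩

lemma degM_of_mem_variants {m m' : FreeMagma (Fin n)} (h : m' ∈ variants m) :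
    degM m' = degM m := by
  induction m generalizing m' with
  | ih1 i =>
    rw [variants, Multiset.mem_singleton] at h
    rw [h]
  | ih2 x y ihx ihy =>
    rw [show variants (x * y) = variants (FreeMagma.mul x y) from rfl, variants,
      Multiset.mem_bind] at h
    obtain ⟨x', hx', h⟩ := h
    rw [Multiset.mem_bind] at h
    obtain ⟨y', hy', h⟩ := h
    rcases (by simpa using h : m' = x' * y' ∨ m' = y' * x') with rfl | rfl
    · show degM (FreeMagma.mul x' y') = _
      rw [degM, ihx hx', ihy hy']; rfl
    · show degM (FreeMagma.mul y' x') = _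
      rw [degM, ihx hx', ihy hy']
      show degM y + degM x = degM x + degM y
      exact Nat.add_comm _ _

lemma commEq_of_mem_variants {m m' : FreeMagma (Fin n)} (h : m' ∈ variants m) :
    CommEq m' m := by
  induction m generalizing m' with
  | ih1 i =>
    rw [variants, Multiset.mem_singleton] at h
    rw [h]; exact CommEq.refl _
  | ih2 x y ihx ihy =>
    rw [show variants (x * y) = variants (FreeMagma.mul x y) from rfl, variants,
      Multiset.mem_bind] at h
    obtain ⟨x', hx', h⟩ := h
    rw [Multiset.mem_bind] at h
    obtain ⟨y', hy', h⟩ := h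
    rcases (by simpa using h : m' = x' * y' ∨ m' = y' * x') with rfl | rfl
    · exact CommEq.mul_congr (ihx hx') (ihy hy')
    · exact CommEq.trans (CommEq.comm y' x') (CommEq.mul_congr (ihx hx') (ihy hy'))

lemma variants_congr {a b : FreeMagma (Fin n)} (h : CommEq a b) :
    variants a = variants b := by
  induction h with
  | refl m => rfl
  | symm _ ih => exact ih.symm
  | trans _ _ ih1 ih2 => exact ih1.trans ih2
  | comm a b =>
    show variants (FreeMagma.mul a b) = variants (FreeMagma.mul b a)
    rw [variants, variants, Multiset.bind_bind]
    refine Multiset.bind_congr fun y' _ => Multiset.bind_congr fun x' _ => ?_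
    show (x' * y') ::ₘ (y' * x') ::ₘ 0 = (y' * x') ::ₘ (x' * y') ::ₘ 0
    exact Multiset.cons_swap _ _ _
  | mul_congr _ _ ih1 ih2 =>
    show variants (FreeMagma.mul _ _) = variants (FreeMagma.mul _ _)
    rw [variants, variants, ih1, ih2]

lemma multiset_sum_boole {α : Type*} {F : Type*} [CommRing F] (s : Multiset α)
    (p : α → Prop) [DecidablePred p] :
    (s.map fun a => if p a then (1:F) else 0).sum = (s.countP p : F) := by
  induction s using Multiset.induction_on with
  | empty => simp
  | cons a s ih =>
    by_cases h : p a <;>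
      simp [Multiset.countP_cons, h, ih, add_comm]

lemma coeff_psi {F : Type*} [CommRing F] (m : FreeMagma (Fin n)) (hm : degM m ≤ d)
    (μ : (Fin n × Fin d × Fin d) →₀ ℕ) :
    (psi F d m).coeff μ = (((variants m).countP fun m' => Efun d m' = μ) : F) := by
  classical
  rw [psi,
    Multiset.map_congr rfl (fun m' hm' => monProd_eq_monomial m'
      (le_of_eq_of_le (degM_of_mem_variants hm') hm)),
    ← MvPolynomial.lcoeff_apply, map_multiset_sum, Multiset.map_map,
    Multiset.map_congr rfl (fun m' _ => by
      rw [Function.comp_apply, MvPolynomial.lcoeff_apply, MvPolynomial.coeff_monomial]),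
    multiset_sum_boole]

lemma psi_ne_zero {F : Type*} [Field F] [CharZero F] (m : FreeMagma (Fin n))
    (hm : degM m ≤ d) : psi F d m ≠ 0 := by
  classical
  intro h0
  have hc := coeff_psi (F := F) m hm (Efun d m)
  rw [h0, MvPolynomial.coeff_zero] at hc
  have hpos : 0 < (variants m).countP fun m' => Efun d m' = Efun d m :=
    Multiset.countP_pos.mpr ⟨m, self_mem_variants m, rfl⟩
  rw [eq_comm, Nat.cast_eq_zero] at hc
  omega

end Aux3

/-- Let `F` be a field of characteristic `0` and `n, d ≥ 1`.  For a monomial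
`m` (element of the free magma on `Fin n`) of degree `≤ d`, let
`ψ(m) := ∑_ε ∏_{t=1}^{d'} z_{σ_{m_ε}(t), t, l^{m_ε}_t} ∈ R` (sum over all choices `ε` of a
Boolean for each internal node of `m`).  Then:
(i)  `ψ(m) ≠ 0`;
(ii) if `m ≈ m'` (the commutativity congruence) then `ψ(m) = ψ(m')`; and
(iii) if `m ≉ m'` (both of degree `≤ d`), the sets of monomials occurring with nonzero
coefficient in `ψ(m)` and `ψ(m')` are disjoint; in particular `ψ(m) ≠ ψ(m')`. -/
theorem psi_properties {F : Type*} [Field F] [CharZero F] (n d : ℕ)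
    (hn : 1 ≤ n) (hd : 1 ≤ d) :
    (∀ m : FreeMagma (Fin n), degM m ≤ d → psi F d m ≠ 0) ∧
    (∀ m m' : FreeMagma (Fin n), degM m ≤ d → degM m' ≤ d → CommEq m m' →
        psi F d m = psi F d m') ∧
    (∀ m m' : FreeMagma (Fin n), degM m ≤ d → degM m' ≤ d → ¬ CommEq m m' →
        Disjoint (psi F d m).support (psi F d m').support ∧
        psi F d m ≠ psi F d m') := by
  classical
  refine ⟨fun m hm => psi_ne_zero m hm, ?_, ?_⟩
  · intro m m' _ _ h
    rw [psi, psi, variants_congr h]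
  · intro m m' hm hm' hne
    have hdisj : Disjoint (psi F d m).support (psi F d m').support := by
      rw [Finset.disjoint_left]
      intro μ hμ hμ'
      rw [MvPolynomial.mem_support_iff, coeff_psi m hm μ, Ne, Nat.cast_eq_zero,
        ← Ne, ← Nat.pos_iff_ne_zero] at hμ
      rw [MvPolynomial.mem_support_iff, coeff_psi m' hm' μ, Ne, Nat.cast_eq_zero,
        ← Ne, ← Nat.pos_iff_ne_zero] at hμ'
      obtain ⟨m₁, hm₁, hE₁⟩ := Multiset.countP_pos.mp hμ
      obtain ⟨m₂, hm₂, hE₂⟩ := Multiset.countP_pos.mp hμ'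
      have h12 : m₁ = m₂ := Efun_inj m₁ m₂
        (le_of_eq_of_le (degM_of_mem_variants hm₁) hm)
        (le_of_eq_of_le (degM_of_mem_variants hm₂) hm')
        (hE₁.trans hE₂.symm)
      exact hne (CommEq.trans (CommEq.symm (commEq_of_mem_variants hm₁))
        (h12 ▸ commEq_of_mem_variants hm₂))
    refine ⟨hdisj, fun heq => ?_⟩
    rw [heq, Finset.disjoint_self_iff_empty, MvPolynomial.support_eq_empty] at hdisj
    exact psi_ne_zero m' hm' hdisj


end NAPIT
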